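/- Under the OGM setup (f convex, differentiable, L-smooth with minimizer x⋆; θ₀ = 1, 0 ≤ θ_{k+1}² − θ_{k+1} ≤ θₖ²; iterates y_{k+1} = xₖ − (1/L)∇f(xₖ), z_{k+1} = zₖ − (2θₖ/L)∇f(xₖ), x_{k+1} = (1 − 1/θ_{k+1})y_{k+1} + (1/θ_{k+1})z_{k+1}, x₀ = y₀ = z₀), one has f(yₖ) − f(x⋆) ≤ L‖x₀ − x⋆‖²/(4θ_{k−1}²) for all k ≥ 1. -/

import Mathlib

open RealInnerProductSpace InnerProductSpace

section Helpers

variable {E : Type*} [NormedAddCommGroup E] [InnerProductSpace ℝ E] [CompleteSpace E]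

lemma ogm_line_hasDerivAt (f : E → ℝ) (f' : E → E) (hdiff : ∀ x, HasGradientAt f (f' x) x)
    (a d : E) (t : ℝ) :
    HasDerivAt (fun s : ℝ => f (a + s • d)) ⟪f' (a + t • d), d⟫ t := by
  have h1 : HasDerivAt (fun s : ℝ => a + s • d) d t := by
    simpa using ((hasDerivAt_id t).smul_const d).const_add a
  have h2 := (hdiff (a + t • d)).hasFDerivAt
  have := h2.comp_hasDerivAt t h1
  simpa [toDual_apply_apply, Function.comp_def] using this

/-- Descent lemma for `L`-smooth functions. -/
lemma ogm_descent (f : E → ℝ) (f' : E → E) (L : ℝ) (hL : 0 < L)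
    (hdiff : ∀ x, HasGradientAt f (f' x) x)
    (hsmooth : ∀ x y, ‖f' x - f' y‖ ≤ L * ‖x - y‖) (a b : E) :
    f b ≤ f a + ⟪f' a, b - a⟫ + L / 2 * ‖b - a‖ ^ 2 := by
  set d := b - a with hd
  set ψ : ℝ → ℝ := fun t => f (a + t • d) - t * ⟪f' a, d⟫ - L / 2 * t ^ 2 * ‖d‖ ^ 2 with hψ
  have hde : ∀ t : ℝ,
      HasDerivAt ψ (⟪f' (a + t • d), d⟫ - ⟪f' a, d⟫ - L / 2 * (2 * t) * ‖d‖ ^ 2) t := by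
    intro t
    have h1 := ogm_line_hasDerivAt f f' hdiff a d t
    have h2 : HasDerivAt (fun s : ℝ => s * ⟪f' a, d⟫) ⟪f' a, d⟫ t := by
      simpa using (hasDerivAt_id t).mul_const (⟪f' a, d⟫)
    have h3 : HasDerivAt (fun s : ℝ => L / 2 * s ^ 2 * ‖d‖ ^ 2) (L / 2 * (2 * t) * ‖d‖ ^ 2) t := by
      have := ((hasDerivAt_pow 2 t).const_mul (L / 2)).mul_const (‖d‖ ^ 2)
      simpa [mul_comm, mul_assoc, mul_left_comm] using this
    exact (h1.sub h2).sub h3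
  have hanti : AntitoneOn ψ (Set.Icc 0 1) := by
    apply antitoneOn_of_deriv_nonpos (convex_Icc 0 1)
    · exact fun t _ => (hde t).continuousAt.continuousWithinAt
    · exact fun t _ => ((hde t).differentiableAt).differentiableWithinAt
    · intro t ht
      rw [interior_Icc] at ht
      rw [(hde t).deriv]
      have hip : ⟪f' (a + t • d) - f' a, d⟫ ≤ L * t * ‖d‖ ^ 2 := by
        calc ⟪f' (a + t • d) - f' a, d⟫ ≤ ‖f' (a + t • d) - f' a‖ * ‖d‖ := real_inner_le_norm _ _
          _ ≤ (L * ‖(a + t • d) - a‖) * ‖d‖ := by gcongr; exact hsmooth _ _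
          _ = L * (|t| * ‖d‖) * ‖d‖ := by rw [add_sub_cancel_left, norm_smul, Real.norm_eq_abs]
          _ = L * t * ‖d‖ ^ 2 := by rw [abs_of_pos ht.1]; ring
      have hsplit : ⟪f' (a + t • d), d⟫ - ⟪f' a, d⟫ = ⟪f' (a + t • d) - f' a, d⟫ := by
        rw [inner_sub_left]
      rw [hsplit]
      nlinarith [hip]
  have h01 := hanti (by norm_num : (0:ℝ) ∈ Set.Icc (0:ℝ) 1)
    (by norm_num : (1:ℝ) ∈ Set.Icc (0:ℝ) 1) zero_le_one
  simp only [hψ, zero_smul, add_zero, one_smul, zero_mul, sub_zero, zero_pow, mul_zero,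
    one_mul, one_pow, mul_one] at h01
  have hab : a + d = b := by rw [hd]; abel
  rw [hab] at h01
  linarith

/-- First-order condition of convexity. -/
lemma ogm_grad_ineq (f : E → ℝ) (f' : E → E)
    (hdiff : ∀ x, HasGradientAt f (f' x) x)
    (hconv : ConvexOn ℝ Set.univ f) (a b : E) :
    f a + ⟪f' a, b - a⟫ ≤ f b := by
  set d := b - a with hd
  set q : ℝ → ℝ := fun t => f (a + t • d) with hq
  have hder : HasDerivAt q ⟪f' a, d⟫ 0 := by
    simpa using ogm_line_hasDerivAt f f' hdiff a d 0
  have htend : Filter.Tendsto (slope q 0) (nhdsWithin 0 (Set.Ioi (0:ℝ))) (nhds ⟪f' a, d⟫) :=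
    (hasDerivAt_iff_tendsto_slope.mp hder).mono_left
      (nhdsWithin_mono 0 (fun t ht => ne_of_gt ht))
  have hev : ∀ᶠ t in nhdsWithin 0 (Set.Ioi (0:ℝ)), slope q 0 t ≤ f b - f a := by
    filter_upwards [Ioo_mem_nhdsGT_of_mem (by norm_num : (0:ℝ) ∈ Set.Ico (0:ℝ) 1)] with t ht
    have hcx := hconv.2 (Set.mem_univ a) (Set.mem_univ b)
      (by linarith [ht.2] : (0:ℝ) ≤ 1 - t) (le_of_lt ht.1) (by ring)
    have hpt : (1 - t) • a + t • b = a + t • d := by rw [hd]; module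
    rw [hpt] at hcx
    simp only [smul_eq_mul] at hcx
    rw [slope_def_field, div_le_iff₀ (by linarith [ht.1] : (0:ℝ) < t - 0)]
    simp only [hq, zero_smul, add_zero]
    nlinarith [hcx]
  have := le_of_tendsto htend hev
  linarith

/-- Cocoercivity-type interpolation inequality for smooth convex functions. -/
lemma ogm_coco (f : E → ℝ) (f' : E → E) (L : ℝ) (hL : 0 < L)
    (hdiff : ∀ x, HasGradientAt f (f' x) x)
    (hconv : ConvexOn ℝ Set.univ f)
    (hsmooth : ∀ x y, ‖f' x - f' y‖ ≤ L * ‖x - y‖) (a b : E) :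
    f a + ⟪f' a, b - a⟫ + 1 / (2 * L) * ‖f' a - f' b‖ ^ 2 ≤ f b := by
  set g : E → ℝ := fun w => f w - ⟪f' a, w⟫ with hg
  set g' : E → E := fun w => f' w - f' a with hg'
  have h1 : ∀ w, HasGradientAt g (g' w) w := by
    intro w
    rw [hasGradientAt_iff_hasFDerivAt]
    have := (hdiff w).hasFDerivAt.sub (toDual ℝ E (f' a)).hasFDerivAt
    simpa [hg, hg', map_sub, toDual_apply_apply, Pi.sub_def] using this
  have h2 : ConvexOn ℝ Set.univ g := by
    refine ⟨convex_univ, ?_⟩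
    intro u _ v _ s t hs ht hst
    have := hconv.2 (Set.mem_univ u) (Set.mem_univ v) hs ht hst
    simp only [hg, smul_eq_mul, inner_add_right, inner_smul_right] at *
    linarith
  have h3 : ∀ u v, ‖g' u - g' v‖ ≤ L * ‖u - v‖ := by
    intro u v
    simpa [hg', sub_sub_sub_cancel_right] using hsmooth u v
  have hmin : g a ≤ g (b - (1/L) • g' b) := by
    have := ogm_grad_ineq g g' h1 h2 a (b - (1/L) • g' b)
    simpa [hg', sub_self] using this
  have hdes := ogm_descent g g' L hL h1 h3 b (b - (1/L) • g' b)
  have e1 : (b - (1/L) • g' b) - b = -((1/L) • g' b) := by abel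
  rw [e1] at hdes
  have e2 : ⟪g' b, -((1/L) • g' b)⟫ = -(1/L) * ‖g' b‖ ^ 2 := by
    rw [inner_neg_right, real_inner_smul_right, real_inner_self_eq_norm_sq]; ring
  have e3 : ‖-((1/L) • g' b)‖ ^ 2 = (1/L)^2 * ‖g' b‖ ^ 2 := by
    rw [norm_neg, norm_smul, Real.norm_eq_abs, mul_pow, abs_of_pos (by positivity : (0:ℝ) < 1/L)]
  rw [e2, e3] at hdes
  have key : g a ≤ g b - 1/(2*L) * ‖g' b‖ ^ 2 := by
    calc g a ≤ g (b - (1/L) • g' b) := hmin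
    _ ≤ g b + -(1/L) * ‖g' b‖^2 + L/2 * ((1/L)^2 * ‖g' b‖^2) := hdes
    _ = g b - 1/(2*L) * ‖g' b‖^2 := by field_simp; ring
  simp only [hg, hg'] at key
  have hrev : ‖f' b - f' a‖ = ‖f' a - f' b‖ := norm_sub_rev _ _
  rw [hrev] at key
  have hsp : ⟪f' a, b - a⟫ = ⟪f' a, b⟫ - ⟪f' a, a⟫ := inner_sub_right _ _ _
  linarith

/-- Expansion of `‖p - c • q‖²`. -/
lemma ogm_norm_sub_smul_sq (p q : E) (c : ℝ) :
    ‖p - c • q‖ ^ 2 = ‖p‖ ^ 2 - 2 * c * ⟪q, p⟫ + c ^ 2 * ‖q‖ ^ 2 := by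
  rw [norm_sub_sq_real, real_inner_smul_right, norm_smul, Real.norm_eq_abs, mul_pow, sq_abs,
    real_inner_comm]
  ring

end Helpers

set_option maxHeartbeats 2000000 in
/-- Convergence rate of OGM's primary sequence:
`f(yₖ) − f⋆ ≤ L‖x₀ − x⋆‖² / (4θ_{k−1}²)` for `k ≥ 1`. -/
theorem ogm_primary_rate (n : ℕ)
    (f : EuclideanSpace ℝ (Fin n) → ℝ)
    (f' : EuclideanSpace ℝ (Fin n) → EuclideanSpace ℝ (Fin n))
    (L : ℝ) (hL : 0 < L)
    (hdiff : ∀ x, HasGradientAt f (f' x) x)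
    (hconv : ConvexOn ℝ Set.univ f)
    (hsmooth : ∀ x y, ‖f' x - f' y‖ ≤ L * ‖x - y‖)
    (xstar : EuclideanSpace ℝ (Fin n)) (hmin : ∀ y, f xstar ≤ f y)
    (θ : ℕ → ℝ) (hθpos : ∀ k, 0 < θ k) (hθ0 : θ 0 = 1)
    (hθrec : ∀ k, 0 ≤ θ (k + 1) ^ 2 - θ (k + 1) ∧ θ (k + 1) ^ 2 - θ (k + 1) ≤ θ k ^ 2)
    (x y z : ℕ → EuclideanSpace ℝ (Fin n))
    (hx0 : x 0 = y 0) (hz0 : z 0 = x 0)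
    (hy : ∀ k, y (k + 1) = x k - (1 / L) • f' (x k))
    (hz : ∀ k, z (k + 1) = z k - (2 * θ k / L) • f' (x k))
    (hx : ∀ k, x (k + 1) = (1 - 1 / θ (k + 1)) • y (k + 1) + (1 / θ (k + 1)) • z (k + 1)) :
    ∀ k, 1 ≤ k → f (y k) - f xstar ≤ L * ‖x 0 - xstar‖ ^ 2 / (4 * θ (k - 1) ^ 2) := by
  have hL' : L ≠ 0 := ne_of_gt hL
  -- gradient vanishes at the minimizer
  have hstar : f' xstar = 0 := by
    have hloc : IsLocalMin f xstar := Filter.Eventually.of_forall hmin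
    have h0 := hloc.hasFDerivAt_eq_zero (hdiff xstar).hasFDerivAt
    have h1 := congrArg (toDual ℝ (EuclideanSpace ℝ (Fin n))).symm h0
    simpa using h1
  have hco := ogm_coco f f' L hL hdiff hconv hsmooth
  -- one gradient step decreases the value
  have hstep : ∀ w, f (w - (1/L) • f' w) ≤ f w - 1/(2*L) * ‖f' w‖ ^ 2 := by
    intro w
    have hdes := ogm_descent f f' L hL hdiff hsmooth w (w - (1/L) • f' w)
    have e1 : (w - (1/L) • f' w) - w = -((1/L) • f' w) := by abel
    rw [e1, inner_neg_right, real_inner_smul_right, real_inner_self_eq_norm_sq, norm_neg,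
      norm_smul, Real.norm_eq_abs, abs_of_pos (by positivity : (0:ℝ) < 1/L)] at hdes
    calc f (w - (1/L) • f' w) ≤ _ := hdes
    _ = f w - 1/(2*L) * ‖f' w‖^2 := by field_simp; ring
  have hlow : ∀ w, 1/(2*L) * ‖f' w‖ ^ 2 ≤ f w - f xstar := by
    intro w
    linarith [hstep w, hmin (w - (1/L) • f' w)]
  -- the potential function
  set Φ : ℕ → ℝ := fun k =>
    θ k ^ 2 * (f (x k) - f xstar - 1/(2*L) * ‖f' (x k)‖ ^ 2) + L/4 * ‖z (k+1) - xstar‖ ^ 2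
    with hΦ
  -- the potential decreases
  have hstepΦ : ∀ k, Φ (k+1) ≤ Φ k := by
    intro k
    have hb := hθpos (k+1)
    obtain ⟨hb2, hab⟩ := hθrec k
    have hbne : θ (k+1) ≠ 0 := ne_of_gt hb
    -- express z (k+1) in terms of x (k+1) and y (k+1)
    have hZeq : z (k+1) = θ (k+1) • x (k+1) - (θ (k+1) - 1) • y (k+1) := by
      rw [hx k]
      match_scalars <;> (field_simp; try ring)
    -- inner product expansion
    have hsplitX : ⟪f' (x (k+1)), x k - xstar⟫
        = ⟪f' (x (k+1)), x k - x (k+1)⟫ + ⟪f' (x (k+1)), x (k+1) - xstar⟫ := by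
      rw [← inner_add_right]
      congr 1
      abel
    have hip : ⟪f' (x (k+1)), z (k+1) - xstar⟫
        = θ (k+1) * ⟪f' (x (k+1)), x (k+1) - xstar⟫
          - (θ (k+1) - 1) * ⟪f' (x (k+1)), x k - xstar⟫
          + ((θ (k+1) - 1)/L) * ⟪f' (x (k+1)), f' (x k)⟫ := by
      rw [hZeq, hy k]
      have hre : θ (k+1) • x (k+1) - (θ (k+1) - 1) • (x k - (1/L) • f' (x k)) - xstar
          = (θ (k+1) • (x (k+1) - xstar) - (θ (k+1) - 1) • (x k - xstar))
            + ((θ (k+1) - 1)/L) • f' (x k) := by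
        match_scalars <;> (field_simp; try ring)
      rw [hre, inner_add_right, inner_sub_right, real_inner_smul_right, real_inner_smul_right,
        real_inner_smul_right]
    -- norm expansion for the new z
    have hZ' : z (k+1+1) - xstar = (z (k+1) - xstar) - (2 * θ (k+1) / L) • f' (x (k+1)) := by
      rw [hz (k+1)]
      abel
    have hZnorm : ‖z (k+1+1) - xstar‖ ^ 2
        = ‖z (k+1) - xstar‖ ^ 2 - 2 * (2 * θ (k+1) / L) * ⟪f' (x (k+1)), z (k+1) - xstar⟫
          + (2 * θ (k+1) / L) ^ 2 * ‖f' (x (k+1))‖ ^ 2 := by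
      rw [hZ', ogm_norm_sub_smul_sq]
    -- the three interpolation inequalities
    have hA2 : f (x (k+1)) + ⟪f' (x (k+1)), x k - x (k+1)⟫
        + 1/(2*L) * (‖f' (x (k+1))‖^2 - 2*⟪f' (x (k+1)), f' (x k)⟫ + ‖f' (x k)‖^2)
        ≤ f (x k) := by
      have := hco (x (k+1)) (x k)
      rwa [norm_sub_sq_real] at this
    have hA3 : f (x (k+1)) - ⟪f' (x (k+1)), x (k+1) - xstar⟫
        + 1/(2*L) * ‖f' (x (k+1))‖^2 ≤ f xstar := by
      have := hco (x (k+1)) xstar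
      rw [hstar, sub_zero] at this
      have hneg : ⟪f' (x (k+1)), xstar - x (k+1)⟫ = -⟪f' (x (k+1)), x (k+1) - xstar⟫ := by
        rw [show xstar - x (k+1) = -(x (k+1) - xstar) by abel, inner_neg_right]
      rw [hneg] at this
      linarith
    have hA4 := hlow (x k)
    -- nonnegative combinations
    have hP2 : 0 ≤ (θ (k+1)^2 - θ (k+1)) * (f (x k) - f (x (k+1)) - ⟪f' (x (k+1)), x k - x (k+1)⟫
        - 1/(2*L) * (‖f' (x (k+1))‖^2 - 2*⟪f' (x (k+1)), f' (x k)⟫ + ‖f' (x k)‖^2)) :=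
      mul_nonneg hb2 (by linarith)
    have hP3 : 0 ≤ θ (k+1) * (f xstar - f (x (k+1)) + ⟪f' (x (k+1)), x (k+1) - xstar⟫
        - 1/(2*L) * ‖f' (x (k+1))‖^2) :=
      mul_nonneg (le_of_lt hb) (by linarith)
    have hP4 : 0 ≤ (θ k^2 - (θ (k+1)^2 - θ (k+1))) * (f (x k) - f xstar
        - 1/(2*L) * ‖f' (x k)‖^2) :=
      mul_nonneg (by linarith) (by linarith [hA4])
    -- the algebraic identity
    have key : Φ k - Φ (k+1)
        = (θ (k+1)^2 - θ (k+1)) * (f (x k) - f (x (k+1)) - ⟪f' (x (k+1)), x k - x (k+1)⟫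
            - 1/(2*L) * (‖f' (x (k+1))‖^2 - 2*⟪f' (x (k+1)), f' (x k)⟫ + ‖f' (x k)‖^2))
          + θ (k+1) * (f xstar - f (x (k+1)) + ⟪f' (x (k+1)), x (k+1) - xstar⟫
            - 1/(2*L) * ‖f' (x (k+1))‖^2)
          + (θ k^2 - (θ (k+1)^2 - θ (k+1))) * (f (x k) - f xstar
            - 1/(2*L) * ‖f' (x k)‖^2) := by
      simp only [hΦ]
      rw [hZnorm, hip, hsplitX]
      field_simp
      ring
    have hsum : 0 ≤ Φ k - Φ (k+1) := by
      rw [key]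
      exact add_nonneg (add_nonneg hP2 hP3) hP4
    linarith [hsum]
  have hchain : ∀ k, Φ k ≤ Φ 0 := by
    intro k
    induction k with
    | zero => exact le_refl _
    | succ m ih => exact (hstepΦ m).trans ih
  -- base case
  have hbase : Φ 0 ≤ L/4 * ‖x 0 - xstar‖ ^ 2 := by
    have hz1 : z 1 - xstar = (x 0 - xstar) - (2/L) • f' (x 0) := by
      rw [hz 0, hz0, hθ0]
      rw [show 2 * 1 / L = 2 / L by ring]
      abel
    have hZnorm : ‖z 1 - xstar‖ ^ 2
        = ‖x 0 - xstar‖ ^ 2 - 2 * (2/L) * ⟪f' (x 0), x 0 - xstar⟫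
          + (2/L) ^ 2 * ‖f' (x 0)‖ ^ 2 := by
      rw [hz1, ogm_norm_sub_smul_sq]
    have hA3 : f (x 0) - ⟪f' (x 0), x 0 - xstar⟫ + 1/(2*L) * ‖f' (x 0)‖^2 ≤ f xstar := by
      have := hco (x 0) xstar
      rw [hstar, sub_zero] at this
      have hneg : ⟪f' (x 0), xstar - x 0⟫ = -⟪f' (x 0), x 0 - xstar⟫ := by
        rw [show xstar - x 0 = -(x 0 - xstar) by abel, inner_neg_right]
      rw [hneg] at this
      linarith
    have key : L/4 * ‖x 0 - xstar‖ ^ 2 - Φ 0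
        = f xstar - f (x 0) + ⟪f' (x 0), x 0 - xstar⟫ - 1/(2*L) * ‖f' (x 0)‖^2 := by
      simp only [hΦ]
      rw [hZnorm, hθ0]
      field_simp
      ring
    linarith [key, hA3]
  -- conclusion
  intro k hk
  obtain ⟨m, rfl⟩ : ∃ m, k = m + 1 := ⟨k - 1, (Nat.succ_pred_eq_of_pos hk).symm⟩
  have hy' : f (y (m+1)) ≤ f (x m) - 1/(2*L) * ‖f' (x m)‖^2 := by
    rw [hy m]
    exact hstep (x m)
  have h1 : θ m ^ 2 * (f (y (m+1)) - f xstar) ≤ Φ m := by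
    have hmul : θ m ^ 2 * (f (y (m+1)) - f xstar)
        ≤ θ m ^ 2 * (f (x m) - f xstar - 1/(2*L) * ‖f' (x m)‖^2) :=
      mul_le_mul_of_nonneg_left (by linarith) (sq_nonneg _)
    have hnn : 0 ≤ L/4 * ‖z (m+1) - xstar‖ ^ 2 := by positivity
    simp only [hΦ]
    linarith
  have h2 : θ m ^ 2 * (f (y (m+1)) - f xstar) ≤ L/4 * ‖x 0 - xstar‖ ^ 2 :=
    h1.trans ((hchain m).trans hbase)
  have hθm := hθpos m
  rw [show m + 1 - 1 = m from rfl, le_div_iff₀ (by positivity : (0:ℝ) < 4 * θ m ^ 2)]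
  nlinarith [h2]
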